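/- Let K ⊆ ℝⁿ be star-shaped with respect to the origin, contain the origin in its interior, and have finite nonzero Lebesgue measure. Then for any nonnegative measurable h : ℝⁿ → ℝ, ∫_{ℝⁿ} h(x) dx = n·vol_n(K)·∫_0^∞ r^{n-1} ∫_{∂K} h(r·y) C_K(dy) dr, where C_K is the cone probability measure on ∂K defined by C_K(A) = vol_n({r x : r ∈ [0,1], x ∈ A})/vol_n(K). -/

import Mathlib

open MeasureTheory Set ENNReal
open scoped Pointwise

namespace Polar17

variable {n : ℕ} {K : Set (Fin n → ℝ)}

/-- The cone over `A ∩ frontier K` with apex 0, exactly as in the hypothesis. -/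
def cone (K A : Set (Fin n → ℝ)) : Set (Fin n → ℝ) :=
  {y | ∃ r ∈ Set.Icc (0:ℝ) 1, ∃ x ∈ A ∩ frontier K, y = r • x}

lemma cone_eq_image (A : Set (Fin n → ℝ)) :
    cone K A = (fun p : ℝ × (Fin n → ℝ) => p.1 • p.2) '' (Set.Icc (0:ℝ) 1 ×ˢ (A ∩ frontier K)) := by
  ext y
  constructor
  · rintro ⟨r, hr, x, hx, rfl⟩; exact ⟨(r, x), ⟨hr, hx⟩, rfl⟩
  · rintro ⟨⟨r, x⟩, ⟨hr, hx⟩, rfl⟩; exact ⟨r, hr, x, hx, rfl⟩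

lemma cone_mono {A A' : Set (Fin n → ℝ)} (h : A ⊆ A') : cone K A ⊆ cone K A' := by
  rintro y ⟨r, hr, x, ⟨hx1, hx2⟩, rfl⟩; exact ⟨r, hr, x, ⟨h hx1, hx2⟩, rfl⟩

lemma cone_union (A A' : Set (Fin n → ℝ)) :
    cone K (A ∪ A') = cone K A ∪ cone K A' := by
  ext y
  constructor
  · rintro ⟨r, hr, x, ⟨hx1 | hx1, hx2⟩, rfl⟩
    · exact Or.inl ⟨r, hr, x, ⟨hx1, hx2⟩, rfl⟩
    · exact Or.inr ⟨r, hr, x, ⟨hx1, hx2⟩, rfl⟩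
  · rintro (⟨r, hr, x, ⟨hx1, hx2⟩, rfl⟩ | ⟨r, hr, x, ⟨hx1, hx2⟩, rfl⟩)
    · exact ⟨r, hr, x, ⟨Or.inl hx1, hx2⟩, rfl⟩
    · exact ⟨r, hr, x, ⟨Or.inr hx1, hx2⟩, rfl⟩

lemma smul_mem_cone {A : Set (Fin n → ℝ)} {x : Fin n → ℝ} {r : ℝ}
    (hx : x ∈ A ∩ frontier K) (hr : r ∈ Set.Icc (0:ℝ) 1) : r • x ∈ cone K A :=
  ⟨r, hr, x, hx, rfl⟩

lemma mem_cone_self {A : Set (Fin n → ℝ)} {x : Fin n → ℝ} (hx : x ∈ A ∩ frontier K) :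
    x ∈ cone K A := by
  have := smul_mem_cone (K := K) hx (r := 1) ⟨zero_le_one, le_refl 1⟩
  simpa using this

lemma cone_subset_closedBall {A : Set (Fin n → ℝ)} {m : ℝ} (hm : 0 ≤ m)
    (hA : A ∩ frontier K ⊆ Metric.closedBall 0 m) : cone K A ⊆ Metric.closedBall 0 m := by
  rintro y ⟨r, hr, x, hx, rfl⟩
  have hx' := hA hx
  simp only [Metric.mem_closedBall, dist_zero_right] at hx' ⊢
  calc ‖r • x‖ = |r| * ‖x‖ := by rw [norm_smul]; simp [Real.norm_eq_abs]
  _ ≤ 1 * m := by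
      apply mul_le_mul _ hx' (norm_nonneg _) zero_le_one
      rw [abs_of_nonneg hr.1]; exact hr.2
  _ = m := one_mul m

lemma measurableSet_cone {A : Set (Fin n → ℝ)} (hA : IsClosed A) :
    MeasurableSet (cone K A) := by
  have : cone K A = ⋃ k : ℕ,
      (fun p : ℝ × (Fin n → ℝ) => p.1 • p.2) ''
        (Set.Icc (0:ℝ) 1 ×ˢ (A ∩ frontier K ∩ Metric.closedBall 0 k)) := by
    rw [cone_eq_image]
    ext y
    simp only [Set.mem_iUnion, Set.mem_image, Set.mem_prod, Set.mem_inter_iff]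
    constructor
    · rintro ⟨⟨r, x⟩, ⟨hr, hx⟩, rfl⟩
      obtain ⟨k, hk⟩ := exists_nat_ge ‖x‖
      exact ⟨k, ⟨r, x⟩, ⟨hr, ⟨hx, by simpa [Metric.mem_closedBall] using hk⟩⟩, rfl⟩
    · rintro ⟨k, ⟨r, x⟩, ⟨hr, ⟨hx, _⟩⟩, rfl⟩
      exact ⟨⟨r, x⟩, ⟨hr, hx⟩, rfl⟩
  rw [this]
  refine MeasurableSet.iUnion fun k => ?_
  have hcomp : IsCompact (Set.Icc (0:ℝ) 1 ×ˢ (A ∩ frontier K ∩ Metric.closedBall 0 k)) := by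
    apply IsCompact.prod isCompact_Icc
    exact (isCompact_closedBall (0 : Fin n → ℝ) k).of_isClosed_subset
      (((hA.inter isClosed_frontier).inter Metric.isClosed_closedBall)) (fun x hx => hx.2)
  exact (hcomp.image (continuous_fst.smul continuous_snd)).measurableSet

/-- general closed + compact-scalars smul image measurability -/
lemma measurableSet_smul_image {C : Set ℝ} {A : Set (Fin n → ℝ)} (hC : IsCompact C)
    (hA : IsClosed A) :
    MeasurableSet ((fun p : ℝ × (Fin n → ℝ) => p.1 • p.2) '' (C ×ˢ A)) := by
  have : (fun p : ℝ × (Fin n → ℝ) => p.1 • p.2) '' (C ×ˢ A) = ⋃ k : ℕ,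
      (fun p : ℝ × (Fin n → ℝ) => p.1 • p.2) '' (C ×ˢ (A ∩ Metric.closedBall 0 k)) := by
    ext y
    simp only [Set.mem_iUnion, Set.mem_image, Set.mem_prod, Set.mem_inter_iff]
    constructor
    · rintro ⟨⟨r, x⟩, ⟨hr, hx⟩, rfl⟩
      obtain ⟨k, hk⟩ := exists_nat_ge ‖x‖
      exact ⟨k, ⟨r, x⟩, ⟨hr, hx, by simpa [Metric.mem_closedBall] using hk⟩, rfl⟩
    · rintro ⟨k, ⟨r, x⟩, ⟨hr, hx, _⟩, rfl⟩
      exact ⟨⟨r, x⟩, ⟨hr, hx⟩, rfl⟩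
  rw [this]
  refine MeasurableSet.iUnion fun k => ?_
  have hcomp : IsCompact (C ×ˢ (A ∩ Metric.closedBall 0 k)) :=
    hC.prod ((isCompact_closedBall (0 : Fin n → ℝ) k).of_isClosed_subset
      (hA.inter Metric.isClosed_closedBall) (fun x hx => hx.2))
  exact (hcomp.image (continuous_fst.smul continuous_snd)).measurableSet

lemma vol_smul (hn : 0 < n) (c : ℝ) (hc : 0 ≤ c) (S : Set (Fin n → ℝ)) :
    volume (c • S) = ENNReal.ofReal (c ^ n) * volume S := by
  have := Measure.addHaar_smul (volume : Measure (Fin n → ℝ)) c S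
  rw [this]
  congr 1
  rw [abs_of_nonneg (pow_nonneg hc _)]
  congr 1
  simp [Module.finrank_pi]

lemma smul_set_eq_preimage {c : ℝ} (hc : c ≠ 0) (S : Set (Fin n → ℝ)) :
    c • S = (fun x : Fin n → ℝ => c⁻¹ • x) ⁻¹' S := by
  ext x
  simp only [Set.mem_preimage, Set.mem_smul_set]
  constructor
  · rintro ⟨s, hs, rfl⟩; rwa [smul_smul, inv_mul_cancel₀ hc, one_smul]
  · intro hs; exact ⟨c⁻¹ • x, hs, by rw [smul_smul, mul_inv_cancel₀ hc, one_smul]⟩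

lemma measurableSet_smul {c : ℝ} (hc : c ≠ 0) {S : Set (Fin n → ℝ)}
    (hS : MeasurableSet S) : MeasurableSet (c • S) := by
  rw [smul_set_eq_preimage hc]
  exact hS.preimage (measurable_const_smul c⁻¹)

lemma isClosed_companion {p M : ℝ} :
    IsClosed {y : Fin n → ℝ | y ∈ frontier K ∧ ∃ s ∈ Set.Icc p M, s • y ∈ frontier K} := by
  apply IsSeqClosed.isClosed
  intro x y hx hxy
  choose hxB s hs hsB using hx
  obtain ⟨a, ha, φ, hφ, hconv⟩ := isCompact_Icc.tendsto_subseq hs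
  refine ⟨isClosed_frontier.mem_of_tendsto (hxy.comp hφ.tendsto_atTop)
      (Filter.Eventually.of_forall fun k => hxB _), a, ha, ?_⟩
  have : Filter.Tendsto (fun k => s (φ k) • x (φ k)) Filter.atTop (nhds (a • y)) :=
    hconv.smul (hxy.comp hφ.tendsto_atTop)
  exact isClosed_frontier.mem_of_tendsto this
    (Filter.Eventually.of_forall fun k => hsB _)

variable {μ : Measure (Fin n → ℝ)}

lemma vol_cone_eq (hpos : 0 < volume K) (hfin : volume K < ⊤)
    (hμ : ∀ A : Set (Fin n → ℝ), MeasurableSet A → μ A = volume (cone K A) / volume K)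
    {A : Set (Fin n → ℝ)} (hA : MeasurableSet A) :
    volume (cone K A) = volume K * μ A := by
  rw [hμ A hA, mul_comm, ENNReal.div_mul_cancel hpos.ne' hfin.ne]

lemma μ_fin_of_bounded (hpos : 0 < volume K) (hfin : volume K < ⊤)
    (hμ : ∀ A : Set (Fin n → ℝ), MeasurableSet A → μ A = volume (cone K A) / volume K)
    {A : Set (Fin n → ℝ)} (hA : MeasurableSet A) {m : ℝ} (hm : 0 ≤ m)
    (hAb : A ⊆ Metric.closedBall 0 m) : μ A < ⊤ := by
  rw [hμ A hA]
  apply ENNReal.div_lt_top _ hpos.ne'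
  have : volume (cone K A) ≤ volume (Metric.closedBall (0 : Fin n → ℝ) m) :=
    measure_mono (cone_subset_closedBall hm (fun x hx => hAb hx.1))
  exact (this.trans_lt (MeasureTheory.measure_closedBall_lt_top)).ne

lemma mu_eq_inter_of_cone_subset (hpos : 0 < volume K) (hfin : volume K < ⊤)
    (hμ : ∀ A : Set (Fin n → ℝ), MeasurableSet A → μ A = volume (cone K A) / volume K)
    {A C : Set (Fin n → ℝ)} (hA : MeasurableSet A) (hC : MeasurableSet C)
    (hCfin : μ C < ⊤) (hsub : cone K A ⊆ cone K C) : μ A = μ (A ∩ C) := by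
  have hUC : μ (A ∪ C) = μ C := by
    rw [hμ _ (hA.union hC), hμ _ hC]
    have hCC : cone K (A ∪ C) = cone K C := by
      rw [cone_union]
      exact le_antisymm (union_subset hsub (subset_refl _)) subset_union_right
    rw [hCC]
  have hdiff : μ (A \ C) = 0 := by
    have h1 : μ (A \ C) + μ C = μ (A ∪ C) := by
      rw [← measure_union disjoint_sdiff_left hC, diff_union_self]
    rw [hUC] at h1
    exact (ENNReal.add_right_inj hCfin.ne).mp
      (by rw [add_comm] at h1; rw [h1, add_zero])
  have := measure_inter_add_diff (μ := μ) A hC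
  rw [hdiff, add_zero] at this
  exact this.symm

lemma no_thickness (hn : 0 < n) (hpos : 0 < volume K) (hfin : volume K < ⊤)
    (hμ : ∀ A : Set (Fin n → ℝ), MeasurableSet A → μ A = volume (cone K A) / volume K)
    {δ : ℝ} (hδ : 0 < δ) (hδB : ∀ y ∈ frontier K, δ ≤ ‖y‖)
    {p M m : ℝ} (hp : 1 < p) (hpM : p ≤ M) (hm : 0 < m) :
    μ ({y : Fin n → ℝ | y ∈ frontier K ∧ ∃ s ∈ Set.Icc p M, s • y ∈ frontier K}
        ∩ Metric.closedBall 0 m) = 0 := by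
  classical
  set B := frontier K with hB
  set F0 : Set (Fin n → ℝ) :=
    {y : Fin n → ℝ | y ∈ B ∧ ∃ s ∈ Set.Icc p M, s • y ∈ B} ∩ Metric.closedBall 0 m with hF0
  have hF0closed : IsClosed F0 := isClosed_companion.inter Metric.isClosed_closedBall
  set Φ : Set (Fin n → ℝ) → Set (Fin n → ℝ) := fun F =>
    F ∩ (((fun q : ℝ × (Fin n → ℝ) => q.1 • q.2) '' (Set.Icc p M ×ˢ F)) ∩ B) with hΦ
  set F : ℕ → Set (Fin n → ℝ) := fun k => Φ^[k] F0 with hF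
  have hM0 : (0:ℝ) < M := lt_of_lt_of_le (lt_trans one_pos hp) hpM
  -- main induction
  have key : ∀ k : ℕ, IsClosed (F k) ∧ F k ⊆ F0 ∧ (∀ y ∈ F k, δ * p ^ k ≤ ‖y‖) ∧
      μ (F 0) = μ (F k) := by
    intro k
    induction k with
    | zero =>
      refine ⟨hF0closed, subset_refl _, fun y hy => ?_, rfl⟩
      simpa using hδB y hy.1.1
    | succ k ih =>
      obtain ⟨hcl, hsub0, hnorm, hμk⟩ := ih
      have hFk1 : F (k+1) = Φ (F k) := Function.iterate_succ_apply' Φ k F0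
      have hFkb : F k ⊆ Metric.closedBall 0 m := fun y hy => (hsub0 hy).2
      have hFkB : F k ⊆ B := fun y hy => (hsub0 hy).1.1
      -- the companion set C
      set C : Set (Fin n → ℝ) :=
        ((fun q : ℝ × (Fin n → ℝ) => q.1 • q.2) '' (Set.Icc p M ×ˢ F k)) ∩ B with hC
      have hCmeas : MeasurableSet C :=
        (measurableSet_smul_image isCompact_Icc hcl).inter isClosed_frontier.measurableSet
      have hCclosed : IsClosed C := by
        have hcomp : IsCompact ((fun q : ℝ × (Fin n → ℝ) => q.1 • q.2) ''
            (Set.Icc p M ×ˢ F k)) := by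
          refine IsCompact.image (IsCompact.prod isCompact_Icc ?_)
            (continuous_fst.smul continuous_snd)
          exact (isCompact_closedBall (0 : Fin n → ℝ) m).of_isClosed_subset hcl hFkb
        exact hcomp.isClosed.inter isClosed_frontier
      have hCbd : C ⊆ Metric.closedBall 0 (M * m) := by
        rintro y ⟨⟨⟨s, x⟩, ⟨hs, hx⟩, rfl⟩, -⟩
        simp only [Metric.mem_closedBall, dist_zero_right]
        have hxm : ‖x‖ ≤ m := by simpa [Metric.mem_closedBall, dist_zero_right] using hFkb hx
        calc ‖s • x‖ = |s| * ‖x‖ := by rw [norm_smul]; simp [Real.norm_eq_abs]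
        _ ≤ M * m := mul_le_mul (by rw [abs_of_nonneg (le_trans (le_trans zero_le_one hp.le) hs.1)]; exact hs.2)
            hxm (norm_nonneg _) hM0.le
      have hCfin : μ C < ⊤ := μ_fin_of_bounded hpos hfin hμ hCmeas
        (mul_nonneg hM0.le hm.le) hCbd
      have hconesub : cone K (F k) ⊆ cone K C := by
        rintro z ⟨r, hr, y, ⟨hyF, hyB⟩, rfl⟩
        obtain ⟨-, s, hs, hsyB⟩ := (hsub0 hyF).1
        have hspos : (0:ℝ) < s := lt_trans one_pos (lt_of_lt_of_le hp hs.1)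
        refine ⟨r / s, ⟨div_nonneg hr.1 hspos.le, ?_⟩, s • y,
          ⟨⟨⟨(s, y), ⟨hs, hyF⟩, rfl⟩, hsyB⟩, hsyB⟩, ?_⟩
        · exact div_le_one_of_le₀ (le_trans hr.2 (le_trans hp.le hs.1)) hspos.le
        · rw [smul_smul, div_mul_cancel₀ _ hspos.ne']
      have hμstep : μ (F k) = μ (F (k+1)) := by
        rw [hFk1, hΦ]
        exact mu_eq_inter_of_cone_subset hpos hfin hμ hcl.measurableSet hCmeas hCfin hconesub
      refine ⟨?_, ?_, ?_, hμk.trans hμstep⟩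
      · rw [hFk1]; exact hcl.inter hCclosed
      · rw [hFk1]; exact (inter_subset_left).trans hsub0
      · rw [hFk1]
        rintro y ⟨hyF, ⟨⟨s, x⟩, ⟨hs, hx⟩, rfl⟩, -⟩
        have hsp : p ≤ s := hs.1
        have : δ * p ^ k ≤ ‖x‖ := hnorm x hx
        calc δ * p ^ (k+1) = p * (δ * p ^ k) := by ring
        _ ≤ s * ‖x‖ := mul_le_mul hsp this (mul_nonneg hδ.le (pow_nonneg (by linarith) k))
              (le_trans (by linarith) hsp)
        _ = ‖s • x‖ := by rw [norm_smul]; simp [Real.norm_eq_abs,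
              abs_of_nonneg (le_trans (by linarith : (0:ℝ) ≤ p) hsp)]
  -- choose k with δ * p ^ k > m
  obtain ⟨k, hk⟩ := pow_unbounded_of_one_lt (m / δ) hp
  have hFkempty : F k = ∅ := by
    by_contra hne
    obtain ⟨y, hy⟩ := nonempty_iff_ne_empty.2 hne
    have h1 := (key k).2.2.1 y hy
    have h2 : ‖y‖ ≤ m := by
      simpa [Metric.mem_closedBall, dist_zero_right] using ((key k).2.1 hy).2
    have : m / δ < p ^ k := hk
    have : m < δ * p ^ k := by
      rw [div_lt_iff₀ hδ] at this; linarith [this]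
    linarith
  have := (key k).2.2.2
  rw [hFkempty] at this
  exact (by simpa using this : μ (F 0) = 0)

/-! ### Bad sets, the null cone N, the good region G -/

def Bd (K : Set (Fin n → ℝ)) (q M m : ℕ) : Set (Fin n → ℝ) :=
  {y : Fin n → ℝ | y ∈ frontier K ∧
      ∃ s ∈ Set.Icc (1 + 1/((q:ℝ)+1)) ((M:ℝ)+2), s • y ∈ frontier K}
    ∩ Metric.closedBall 0 ((m:ℝ)+1)

lemma isClosed_Bd (q M m : ℕ) : IsClosed (Bd K q M m) :=
  isClosed_companion.inter Metric.isClosed_closedBall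

def Nset (K : Set (Fin n → ℝ)) : Set (Fin n → ℝ) :=
  ⋃ (j : ℕ) (q : ℕ) (M : ℕ) (m : ℕ), ((j:ℝ)+1) • cone K (Bd K q M m)

lemma measurableSet_Nset : MeasurableSet (Nset K) := by
  refine MeasurableSet.iUnion fun j => MeasurableSet.iUnion fun q =>
    MeasurableSet.iUnion fun M => MeasurableSet.iUnion fun m => ?_
  exact measurableSet_smul (by positivity) (measurableSet_cone (isClosed_Bd q M m))

lemma vol_Nset (hn : 0 < n) (hpos : 0 < volume K) (hfin : volume K < ⊤)
    (hμ : ∀ A : Set (Fin n → ℝ), MeasurableSet A → μ A = volume (cone K A) / volume K)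
    {δ : ℝ} (hδ : 0 < δ) (hδB : ∀ y ∈ frontier K, δ ≤ ‖y‖) :
    volume (Nset K) = 0 := by
  have hBd : ∀ q M m : ℕ, volume (cone K (Bd K q M m)) = 0 := by
    intro q M m
    have hq : (1:ℝ) < 1 + 1/((q:ℝ)+1) := by
      have : (0:ℝ) < 1/((q:ℝ)+1) := by positivity
      linarith
    have hμ0 : μ (Bd K q M m) = 0 := by
      apply no_thickness hn hpos hfin hμ hδ hδB hq
      · have h1 : 1/((q:ℝ)+1) ≤ 1 := by
          rw [div_le_one (by positivity)]; linarith [Nat.cast_nonneg (α := ℝ) q]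
        have h2 : (0:ℝ) ≤ (M:ℝ) := Nat.cast_nonneg M
        linarith
      · positivity
    have := vol_cone_eq hpos hfin hμ (isClosed_Bd (K := K) q M m).measurableSet
    rw [hμ0, mul_zero] at this
    exact this
  rw [Nset]
  refine le_antisymm ?_ (zero_le)
  calc volume (⋃ (j : ℕ) (q : ℕ) (M : ℕ) (m : ℕ), ((j:ℝ)+1) • cone K (Bd K q M m))
      ≤ ∑' (j : ℕ), volume (⋃ (q : ℕ) (M : ℕ) (m : ℕ), ((j:ℝ)+1) • cone K (Bd K q M m)) :=
        measure_iUnion_le _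
  _ ≤ ∑' (j : ℕ), ∑' (q : ℕ), volume (⋃ (M : ℕ) (m : ℕ), ((j:ℝ)+1) • cone K (Bd K q M m)) :=
        ENNReal.tsum_le_tsum fun j => measure_iUnion_le _
  _ ≤ ∑' (j : ℕ), ∑' (q : ℕ), ∑' (M : ℕ), volume (⋃ (m : ℕ), ((j:ℝ)+1) • cone K (Bd K q M m)) :=
        ENNReal.tsum_le_tsum fun j => ENNReal.tsum_le_tsum fun q => measure_iUnion_le _
  _ ≤ ∑' (j : ℕ), ∑' (q : ℕ), ∑' (M : ℕ), ∑' (m : ℕ), volume (((j:ℝ)+1) • cone K (Bd K q M m)) :=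
        ENNReal.tsum_le_tsum fun j => ENNReal.tsum_le_tsum fun q =>
          ENNReal.tsum_le_tsum fun M => measure_iUnion_le _
  _ = 0 := by
        have hz : ∀ j q M m : ℕ, volume (((j:ℝ)+1) • cone K (Bd K q M m)) = 0 := by
          intro j q M m
          rw [vol_smul hn _ (by positivity), hBd q M m, mul_zero]
        simp only [hz, tsum_zero]

def coneB (K : Set (Fin n → ℝ)) : Set (Fin n → ℝ) := cone K Set.univ

lemma measurableSet_coneB : MeasurableSet (coneB K) := measurableSet_cone isClosed_univ

def Dset (K : Set (Fin n → ℝ)) : Set (Fin n → ℝ) := ⋃ (j : ℕ), ((j:ℝ)+1) • coneB K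

lemma measurableSet_Dset : MeasurableSet (Dset K) :=
  MeasurableSet.iUnion fun j => measurableSet_smul (by positivity) measurableSet_coneB

def Gset (K : Set (Fin n → ℝ)) : Set (Fin n → ℝ) := Dset K \ ({0} ∪ Nset K)

lemma measurableSet_Gset : MeasurableSet (Gset K) :=
  measurableSet_Dset.diff ((measurableSet_singleton 0).union measurableSet_Nset)

lemma ne_zero_of_mem_Gset {x : Fin n → ℝ} (hx : x ∈ Gset K) : x ≠ 0 := by
  intro h; exact hx.2 (Or.inl (by simp [h]))

lemma not_mem_Nset_of_mem_Gset {x : Fin n → ℝ} (hx : x ∈ Gset K) : x ∉ Nset K :=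
  fun h => hx.2 (Or.inr h)

lemma mem_Nset_of_companion {y : Fin n → ℝ} (hy : y ∈ frontier K) {t : ℝ} (ht : 1 < t)
    (hty : t • y ∈ frontier K) {ρ : ℝ} (hρ : 0 < ρ) : ρ • y ∈ Nset K := by
  obtain ⟨q, hq⟩ := exists_nat_ge (1/(t-1))
  obtain ⟨M, hM⟩ := exists_nat_ge t
  obtain ⟨m, hm⟩ := exists_nat_ge ‖y‖
  obtain ⟨j, hj⟩ := exists_nat_ge ρ
  have ht1 : (0:ℝ) < t - 1 := by linarith
  have hyBd : y ∈ Bd K q M m := by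
    refine ⟨⟨hy, t, ⟨?_, by linarith⟩, hty⟩, ?_⟩
    · have hq1 : 1/(t-1) ≤ (q:ℝ)+1 := by linarith
      have : 1/((q:ℝ)+1) ≤ t - 1 := by
        rw [div_le_iff₀ (by positivity)]
        calc (1:ℝ) = (t-1) * (1/(t-1)) := by field_simp
        _ ≤ (t-1) * ((q:ℝ)+1) := by
            apply mul_le_mul_of_nonneg_left hq1 ht1.le
      linarith
    · simp only [Metric.mem_closedBall, dist_zero_right]; linarith
  have hj1 : (0:ℝ) < (j:ℝ)+1 := by positivity
  have hmem : (ρ/((j:ℝ)+1)) • y ∈ cone K (Bd K q M m) := by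
    apply smul_mem_cone ⟨hyBd, hy⟩
    constructor
    · positivity
    · rw [div_le_one hj1]; linarith
  have : ρ • y ∈ ((j:ℝ)+1) • cone K (Bd K q M m) := by
    refine ⟨(ρ/((j:ℝ)+1)) • y, hmem, ?_⟩
    show ((j:ℝ)+1) • (ρ/((j:ℝ)+1)) • y = ρ • y
    rw [smul_smul, mul_div_cancel₀ _ hj1.ne']
  exact Set.mem_iUnion.2 ⟨j, Set.mem_iUnion.2 ⟨q, Set.mem_iUnion.2 ⟨M, Set.mem_iUnion.2 ⟨m, this⟩⟩⟩⟩

/-- two genuinely different boundary representations put the point in `Nset`. -/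
lemma mem_Nset_of_two_reps {x y y' : Fin n → ℝ} {r r' : ℝ}
    (hy : y ∈ frontier K) (hy' : y' ∈ frontier K) (hr : 0 < r) (hr' : 0 < r')
    (hxy : x = r • y) (hxy' : x = r' • y') (hne : y ≠ y') : x ∈ Nset K := by
  rcases lt_trichotomy r r' with hlt | heq | hgt
  · -- y' has companion above: (r'/r) • y' = y
    have ht : 1 < r'/r := (one_lt_div hr).2 hlt
    have hty : (r'/r) • y' ∈ frontier K := by
      have : (r'/r) • y' = y := by
        have : r • y = r' • y' := by rw [← hxy, ← hxy']
        calc (r'/r) • y' = (r⁻¹ * r') • y' := by rw [div_eq_inv_mul]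
        _ = r⁻¹ • (r' • y') := by rw [smul_smul]
        _ = r⁻¹ • (r • y) := by rw [this]
        _ = y := by rw [smul_smul, inv_mul_cancel₀ hr.ne', one_smul]
      rw [this]; exact hy
    rw [hxy']
    exact mem_Nset_of_companion hy' ht hty hr'
  · exfalso
    apply hne
    apply smul_right_injective (Fin n → ℝ) hr.ne'
    show r • y = r • y'
    rw [← hxy, heq, ← hxy']
  · have ht : 1 < r/r' := (one_lt_div hr').2 hgt
    have hty : (r/r') • y ∈ frontier K := by
      have : (r/r') • y = y' := by
        have hrr : r' • y' = r • y := by rw [← hxy, ← hxy']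
        calc (r/r') • y = (r'⁻¹ * r) • y := by rw [div_eq_inv_mul]
        _ = r'⁻¹ • (r • y) := by rw [smul_smul]
        _ = r'⁻¹ • (r' • y') := by rw [hrr]
        _ = y' := by rw [smul_smul, inv_mul_cancel₀ hr'.ne', one_smul]
      rw [this]; exact hy'
    rw [hxy]
    exact mem_Nset_of_companion hy ht hty hr

lemma exists_rep_of_mem_Gset {x : Fin n → ℝ} (hx : x ∈ Gset K) :
    ∃ r : ℝ, 0 < r ∧ ∃ y ∈ frontier K, x = r • y := by
  have hxne := ne_zero_of_mem_Gset hx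
  have hD := hx.1
  rw [Dset, Set.mem_iUnion] at hD
  obtain ⟨j, hj⟩ := hD
  rw [Set.mem_smul_set] at hj
  obtain ⟨z, hz, hxz⟩ := hj
  obtain ⟨r', hr', w, hw, rfl⟩ := hz
  have hr'0 : r' ≠ 0 := by
    rintro rfl
    apply hxne
    rw [← hxz]; simp
  have hr'pos : 0 < r' := lt_of_le_of_ne hr'.1 (Ne.symm hr'0)
  refine ⟨((j:ℝ)+1) * r', by positivity, w, hw.2, by rw [← hxz, smul_smul]⟩

lemma rep_unique {x y y' : Fin n → ℝ} {r r' : ℝ} (hx : x ∈ Gset K)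
    (hy : y ∈ frontier K) (hy' : y' ∈ frontier K) (hr : 0 < r) (hr' : 0 < r')
    (hxy : x = r • y) (hxy' : x = r' • y') : r = r' ∧ y = y' := by
  by_cases hne : y = y'
  · subst hne
    rw [hxy] at hxy'
    have : r = r' := by
      have hyne : y ≠ 0 := by
        rintro rfl
        exact ne_zero_of_mem_Gset hx (by rw [hxy]; simp)
      obtain ⟨i, hi⟩ := Function.ne_iff.mp hyne
      have := congrFun hxy' i
      simp only [Pi.smul_apply, smul_eq_mul] at this
      exact mul_right_cancel₀ (by simpa using hi) this
    exact ⟨this, rfl⟩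
  · exact absurd (mem_Nset_of_two_reps hy hy' hr hr' hxy hxy' hne)
      (not_mem_Nset_of_mem_Gset hx)

/-! ### the radial gauge `gfun` and projection `pfun` -/

noncomputable def gfun (K : Set (Fin n → ℝ)) (x : Fin n → ℝ) : ℝ :=
  sInf {t : ℝ | 0 < t ∧ x ∈ t • coneB K}

noncomputable def pfun (K : Set (Fin n → ℝ)) (x : Fin n → ℝ) : Fin n → ℝ := (gfun K x)⁻¹ • x

lemma mem_smul_coneB_mono {x : Fin n → ℝ} {t t' : ℝ} (h0 : 0 < t) (htt' : t ≤ t')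
    (hx : x ∈ t • coneB K) : x ∈ t' • coneB K := by
  have ht' : 0 < t' := lt_of_lt_of_le h0 htt'
  obtain ⟨z, hz, hxz⟩ := hx
  obtain ⟨r, hr, w, hw, rfl⟩ := hz
  refine ⟨(t * r / t') • w, smul_mem_cone hw ⟨div_nonneg (by nlinarith [hr.1]) ht'.le, ?_⟩, ?_⟩
  · rw [div_le_one ht']
    calc t * r ≤ t * 1 := by nlinarith [hr.2, hr.1]
    _ ≤ t' := by linarith
  · show t' • (t * r / t') • w = x
    rw [← hxz]
    show t' • (t * r / t') • w = t • (r • w)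
    rw [smul_smul, smul_smul, mul_div_cancel₀ _ ht'.ne']

lemma gfun_nonneg (x : Fin n → ℝ) : 0 ≤ gfun K x := by
  rcases Set.eq_empty_or_nonempty {t : ℝ | 0 < t ∧ x ∈ t • coneB K} with he | hne
  · rw [gfun, he, Real.sInf_empty]
  · exact le_csInf hne fun t ht => ht.1.le

lemma gfun_eq {x y : Fin n → ℝ} {r : ℝ} (hx : x ∈ Gset K) (hr : 0 < r)
    (hy : y ∈ frontier K) (hxy : x = r • y) : gfun K x = r := by
  have hset : {t : ℝ | 0 < t ∧ x ∈ t • coneB K} = Set.Ici r := by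
    ext t
    simp only [Set.mem_setOf_eq, Set.mem_Ici]
    constructor
    · rintro ⟨ht0, z, hz, hxz⟩
      obtain ⟨r', hr', w, hw, rfl⟩ := hz
      have hr'0 : r' ≠ 0 := by
        rintro rfl
        apply ne_zero_of_mem_Gset hx
        rw [← hxz]; simp
      have hr'pos : 0 < r' := lt_of_le_of_ne hr'.1 (Ne.symm hr'0)
      have hxw : x = (t * r') • w := by
        rw [← hxz]
        show t • (r' • w) = (t * r') • w
        rw [smul_smul]
      have := rep_unique hx hy hw.2 hr (by positivity) hxy hxw
      calc r = t * r' := this.1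
      _ ≤ t * 1 := by nlinarith [hr'.2]
      _ = t := mul_one t
    · intro hrt
      exact ⟨lt_of_lt_of_le hr hrt,
        mem_smul_coneB_mono hr hrt ⟨y, mem_cone_self ⟨trivial, hy⟩, hxy.symm⟩⟩
  rw [gfun, hset, csInf_Ici]

lemma rep_gfun_pfun {x : Fin n → ℝ} (hx : x ∈ Gset K) :
    0 < gfun K x ∧ pfun K x ∈ frontier K ∧ x = gfun K x • pfun K x := by
  obtain ⟨r, hr, y, hy, hxy⟩ := exists_rep_of_mem_Gset hx
  have hg := gfun_eq hx hr hy hxy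
  rw [hg]
  have hp : pfun K x = y := by
    rw [pfun, hg, hxy, smul_smul, inv_mul_cancel₀ hr.ne', one_smul]
  rw [hp]
  exact ⟨hr, hy, hxy⟩

lemma measurable_gfun : Measurable (gfun K) := by
  apply measurable_of_Iio
  intro c
  by_cases hc : 0 < c
  · have hEq : gfun K ⁻¹' (Set.Iio c) = (Dset K)ᶜ ∪
        ⋃ (q : ℚ) (_ : q ∈ {q : ℚ | 0 < (q:ℝ) ∧ (q:ℝ) < c}), (q:ℝ) • coneB K := by
      ext x
      simp only [Set.mem_preimage, Set.mem_Iio, Set.mem_union, Set.mem_compl_iff,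
        Set.mem_iUnion, Set.mem_setOf_eq]
      constructor
      · intro hgx
        rcases Set.eq_empty_or_nonempty {t : ℝ | 0 < t ∧ x ∈ t • coneB K} with he | hne
        · left
          intro hD
          rw [Dset, Set.mem_iUnion] at hD
          obtain ⟨j, hj⟩ := hD
          have hmem : ((j:ℝ)+1) ∈ {t : ℝ | 0 < t ∧ x ∈ t • coneB K} := ⟨by positivity, hj⟩
          rw [he] at hmem
          exact hmem
        · right
          obtain ⟨t, ht, htc⟩ := exists_lt_of_csInf_lt hne hgx
          obtain ⟨q, hq1, hq2⟩ := exists_rat_btwn htc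
          exact ⟨q, ⟨lt_trans ht.1 hq1, hq2⟩, mem_smul_coneB_mono ht.1 hq1.le ht.2⟩
      · rintro (hD | ⟨q, ⟨hq0, hqc⟩, hqmem⟩)
        · have he : {t : ℝ | 0 < t ∧ x ∈ t • coneB K} = ∅ := by
            rw [Set.eq_empty_iff_forall_notMem]
            rintro t ⟨ht0, htc⟩
            apply hD
            obtain ⟨j, hj⟩ := exists_nat_ge t
            rw [Dset, Set.mem_iUnion]
            exact ⟨j, mem_smul_coneB_mono ht0 (by linarith) htc⟩
          rw [gfun, he, Real.sInf_empty]
          exact hc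
        · calc gfun K x ≤ (q:ℝ) := csInf_le ⟨0, fun t ht => ht.1.le⟩ ⟨hq0, hqmem⟩
          _ < c := hqc
    rw [hEq]
    exact measurableSet_Dset.compl.union (MeasurableSet.biUnion (Set.to_countable _)
      fun q hq => measurableSet_smul (ne_of_gt hq.1) measurableSet_coneB)
  · have : gfun K ⁻¹' (Set.Iio c) = ∅ := by
      rw [Set.eq_empty_iff_forall_notMem]
      intro x hx
      simp only [Set.mem_preimage, Set.mem_Iio] at hx
      exact hc (lt_of_le_of_lt (gfun_nonneg x) hx)
    rw [this]
    exact MeasurableSet.empty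

lemma measurable_pfun : Measurable (pfun K) :=
  (measurable_gfun.inv).smul measurable_id

/-! ### null sets and volume identities -/

def Sfull (K : Set (Fin n → ℝ)) : Set (Fin n → ℝ) := {x | ∀ t : ℝ, 0 < t → t • x ∈ K}

lemma vol_Sfull (hn : 0 < n) (hfin : volume K < ⊤) : volume (Sfull K) = 0 := by
  have hsub : Sfull K ⊆ K := fun x hx => by simpa using hx 1 one_pos
  have hsmul : (2:ℝ) • Sfull K = Sfull K := by
    ext x
    constructor
    · rintro ⟨s, hs, rfl⟩ t ht
      show t • (2:ℝ) • s ∈ K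
      rw [smul_smul]
      exact hs (t * 2) (by positivity)
    · intro hx
      refine ⟨(2:ℝ)⁻¹ • x, fun t ht => ?_, ?_⟩
      · rw [smul_smul]
        exact hx _ (by positivity)
      · show (2:ℝ) • (2:ℝ)⁻¹ • x = x
        rw [smul_smul]; norm_num
  have h2 : volume (Sfull K) = ENNReal.ofReal (2^n) * volume (Sfull K) := by
    conv_lhs => rw [← hsmul, vol_smul hn 2 (by norm_num)]
  by_contra hne
  have hne' : volume (Sfull K) ≠ 0 := hne
  have hfin' : volume (Sfull K) ≠ ⊤ := ((measure_mono hsub).trans_lt hfin).ne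
  have h1 : (1:ℝ≥0∞) < ENNReal.ofReal (2^n) := by
    rw [show (1:ℝ≥0∞) = ENNReal.ofReal 1 by simp]
    exact ENNReal.ofReal_lt_ofReal_iff_of_nonneg zero_le_one |>.2 (one_lt_pow₀ (by norm_num) hn.ne')
  have : volume (Sfull K) < ENNReal.ofReal (2^n) * volume (Sfull K) := by
    conv_lhs => rw [← one_mul (volume (Sfull K))]
    exact ENNReal.mul_lt_mul_left hne' hfin' h1
  rw [← h2] at this
  exact lt_irrefl _ this

lemma ray_to_frontier (hstar : ∀ x ∈ K, ∀ r ∈ Set.Icc (0:ℝ) 1, r • x ∈ K)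
    (h0 : (0 : Fin n → ℝ) ∈ interior K) {x : Fin n → ℝ} (hx : x ≠ 0)
    {t₁ : ℝ} (ht₁ : 0 < t₁) (ht₁K : t₁ • x ∉ K) :
    ∃ τ : ℝ, 0 < τ ∧ τ • x ∈ frontier K ∧ (∀ t : ℝ, 0 < t → t • x ∈ K → t ≤ τ) ∧
      (∀ t : ℝ, 0 < t → t < τ → t • x ∈ K) := by
  obtain ⟨ε, hε, hball⟩ := Metric.isOpen_iff.1 isOpen_interior 0 h0
  have hxn : 0 < ‖x‖ := norm_pos_iff.2 hx
  set I : Set ℝ := {t | 0 < t ∧ t • x ∈ K} with hI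
  have hdown : ∀ t ∈ I, ∀ s : ℝ, 0 < s → s ≤ t → s ∈ I := by
    rintro t ⟨ht0, htK⟩ s hs0 hst
    refine ⟨hs0, ?_⟩
    have : (s/t) • (t • x) ∈ K :=
      hstar _ htK _ ⟨div_nonneg hs0.le ht0.le, div_le_one_of_le₀ hst ht0.le⟩
    rwa [smul_smul, div_mul_cancel₀ _ ht0.ne'] at this
  have hne : (ε/(2*‖x‖)) ∈ I := by
    refine ⟨by positivity, interior_subset (hball ?_)⟩
    simp only [Metric.mem_ball, dist_zero_right, norm_smul, Real.norm_eq_abs,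
      abs_of_pos (by positivity : (0:ℝ) < ε/(2*‖x‖))]
    rw [div_mul_eq_mul_div, mul_comm]
    rw [div_lt_iff₀ (by positivity)]
    nlinarith
  have hbdd : BddAbove I := by
    refine ⟨t₁, fun t ht => ?_⟩
    by_contra hlt
    push_neg at hlt
    exact ht₁K (hdown t ht t₁ ht₁ hlt.le).2
  set τ := sSup I with hτ
  have hτpos : 0 < τ := lt_of_lt_of_le (by positivity) (le_csSup hbdd hne)
  have hub : ∀ t : ℝ, 0 < t → t • x ∈ K → t ≤ τ := fun t h1 h2 => le_csSup hbdd ⟨h1, h2⟩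
  have hbelow : ∀ t : ℝ, 0 < t → t < τ → t • x ∈ K := by
    intro t h1 h2
    obtain ⟨t', ht'I, htt'⟩ := exists_lt_of_lt_csSup ⟨_, hne⟩ h2
    exact (hdown t' ht'I t h1 htt'.le).2
  refine ⟨τ, hτpos, ?_, hub, hbelow⟩
  rw [frontier_eq_closure_inter_closure]
  constructor
  · rw [Metric.mem_closure_iff]
    intro ε' hε'
    obtain ⟨t, htI, htlt⟩ := exists_lt_of_lt_csSup ⟨_, hne⟩
      (show τ - ε'/(‖x‖+1) < τ from sub_lt_self τ (by positivity))
    refine ⟨t • x, htI.2, ?_⟩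
    have htτ : t ≤ τ := le_csSup hbdd htI
    rw [dist_eq_norm, ← sub_smul, norm_smul, Real.norm_eq_abs,
      abs_of_nonneg (by linarith : (0:ℝ) ≤ τ - t)]
    have h1 : τ - t < ε'/(‖x‖+1) := by linarith
    calc (τ - t) * ‖x‖ ≤ (τ - t) * (‖x‖+1) := by nlinarith
    _ < (ε'/(‖x‖+1)) * (‖x‖+1) := by
        apply mul_lt_mul_of_pos_right h1 (by positivity)
    _ = ε' := by field_simp
  · rw [Metric.mem_closure_iff]
    intro ε' hε'
    set t := τ + (ε'/(‖x‖+1))/2 with ht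
    have htτ : τ < t := lt_add_of_pos_right τ (by positivity)
    have htK : t • x ∉ K := by
      intro hK
      exact absurd (hub t (by linarith) hK) (not_le.2 htτ)
    refine ⟨t • x, htK, ?_⟩
    rw [dist_eq_norm, ← sub_smul, norm_smul, Real.norm_eq_abs,
      abs_of_nonpos (by linarith : τ - t ≤ 0)]
    have habs : -(τ - t) = (ε'/(‖x‖+1))/2 := by rw [ht]; ring
    rw [habs]
    calc (ε'/(‖x‖+1))/2 * ‖x‖ < (ε'/(‖x‖+1)) * (‖x‖+1) := by
          have h1 : 0 < ε'/(‖x‖+1) := by positivity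
          nlinarith
    _ = ε' := by field_simp

lemma compl_Gset_subset (hstar : ∀ x ∈ K, ∀ r ∈ Set.Icc (0:ℝ) 1, r • x ∈ K)
    (h0 : (0 : Fin n → ℝ) ∈ interior K) :
    (Gset K)ᶜ ⊆ Sfull K ∪ Nset K := by
  intro x hx
  rw [Gset] at hx
  simp only [Set.mem_compl_iff, Set.mem_diff, not_and_or, not_not] at hx
  rcases hx with hD | hmem
  · -- x not in Dset: the ray through x never leaves K (or x = 0)
    left
    by_cases hx0 : x = 0
    · intro t ht; rw [hx0, smul_zero]; exact interior_subset h0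
    · intro t ht
      by_contra htK
      obtain ⟨τ, hτ, hτB, -, -⟩ := ray_to_frontier hstar h0 hx0 ht htK
      apply hD
      obtain ⟨j, hj⟩ := exists_nat_ge τ⁻¹
      rw [Dset, Set.mem_iUnion]
      refine ⟨j, (τ⁻¹/((j:ℝ)+1)) • (τ • x), smul_mem_cone ⟨trivial, hτB⟩
        ⟨by positivity, ?_⟩, ?_⟩
      · rw [div_le_one (by positivity)]; linarith
      · show ((j:ℝ)+1) • (τ⁻¹/((j:ℝ)+1)) • τ • x = x
        rw [smul_smul, smul_smul, mul_div_cancel₀ _ (by positivity : ((j:ℝ)+1) ≠ 0),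
          inv_mul_cancel₀ hτ.ne', one_smul]
  · rcases hmem with h0' | hN
    · left
      have hx0 : x = 0 := h0'
      intro t ht; rw [hx0, smul_zero]; exact interior_subset h0
    · right; exact hN

lemma vol_compl_Gset (hn : 0 < n)
    (hstar : ∀ x ∈ K, ∀ r ∈ Set.Icc (0:ℝ) 1, r • x ∈ K)
    (h0 : (0 : Fin n → ℝ) ∈ interior K)
    (hpos : 0 < volume K) (hfin : volume K < ⊤)
    (hμ : ∀ A : Set (Fin n → ℝ), MeasurableSet A → μ A = volume (cone K A) / volume K)
    {δ : ℝ} (hδ : 0 < δ) (hδB : ∀ y ∈ frontier K, δ ≤ ‖y‖) :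
    volume ((Gset K)ᶜ) = 0 := by
  have h1 := vol_Sfull (K := K) hn hfin
  have h2 := vol_Nset hn hpos hfin hμ hδ hδB
  refine le_antisymm ?_ (zero_le)
  calc volume ((Gset K)ᶜ) ≤ volume (Sfull K ∪ Nset K) :=
        measure_mono (compl_Gset_subset hstar h0)
  _ ≤ volume (Sfull K) + volume (Nset K) := measure_union_le _ _
  _ = 0 := by rw [h1, h2, add_zero]

lemma ennreal_mul_cancel {a b c : ℝ≥0∞} (h0 : a ≠ 0) (ht : a ≠ ⊤) (h : a * b = a * c) :
    b = c := by
  have := congrArg (fun z => a⁻¹ * z) h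
  simpa [← mul_assoc, ENNReal.inv_mul_cancel h0 ht] using this

lemma cone_smul_closed {A : Set (Fin n → ℝ)} {w : Fin n → ℝ} {s : ℝ}
    (hw : w ∈ cone K A) (hs : s ∈ Set.Icc (0:ℝ) 1) : s • w ∈ cone K A := by
  obtain ⟨r, hr, v, hv, rfl⟩ := hw
  rw [smul_smul]
  exact ⟨s * r, ⟨mul_nonneg hs.1 hr.1, by nlinarith [hs.1, hs.2, hr.1, hr.2]⟩, v, hv, rfl⟩

lemma smul_Nset {z : Fin n → ℝ} (hz : z ∈ Nset K) {c : ℝ} (hc : 0 < c) :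
    c • z ∈ Nset K := by
  rw [Nset] at hz ⊢
  simp only [Set.mem_iUnion] at hz ⊢
  obtain ⟨j, q, M, m, w, hw, hjw⟩ := hz
  obtain ⟨j', hj'⟩ := exists_nat_ge (c * ((j:ℝ)+1))
  have hj'1 : (0:ℝ) < (j':ℝ)+1 := by positivity
  refine ⟨j', q, M, m, (c * ((j:ℝ)+1)/((j':ℝ)+1)) • w, cone_smul_closed hw ⟨by positivity, ?_⟩, ?_⟩
  · rw [div_le_one hj'1]; linarith
  · show ((j':ℝ)+1) • (c * ((j:ℝ)+1)/((j':ℝ)+1)) • w = c • z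
    rw [smul_smul, mul_div_cancel₀ _ hj'1.ne']
    rw [← hjw]
    show (c * ((j:ℝ)+1)) • w = c • ((j:ℝ)+1) • w
    rw [smul_smul]

/-- the boundary points inside the good region have measure zero -/
lemma vol_frontier_Gset (hn : 0 < n) {δ : ℝ} (hδ : 0 < δ)
    (hδB : ∀ y ∈ frontier K, δ ≤ ‖y‖) :
    volume (frontier K ∩ Gset K) = 0 := by
  set E0 := frontier K ∩ Gset K with hE0
  have hE0meas : MeasurableSet E0 :=
    isClosed_frontier.measurableSet.inter measurableSet_Gset
  have key : ∀ m : ℕ, volume (E0 ∩ Metric.closedBall 0 m) = 0 := by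
    intro m
    set Em := E0 ∩ Metric.closedBall 0 m with hEm
    have hEmmeas : MeasurableSet Em := hE0meas.inter measurableSet_closedBall
    set t : ℕ → ℝ := fun i => 1 + 1/((i:ℝ)+1) with htdef
    have ht1 : ∀ i, 1 < t i := fun i => by
      have : (0:ℝ) < 1/((i:ℝ)+1) := by positivity
      simp only [htdef]; linarith
    have ht2 : ∀ i, t i ≤ 2 := fun i => by
      have h1 : 1/((i:ℝ)+1) ≤ 1 := by
        rw [div_le_one (by positivity)]
        linarith [Nat.cast_nonneg (α := ℝ) i]
      simp only [htdef]; linarith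
    have htinj : Function.Injective t := by
      intro i j hij
      simp only [htdef] at hij
      have h1 : 1/((i:ℝ)+1) = 1/((j:ℝ)+1) := by linarith
      have h2 : ((i:ℝ)+1)⁻¹ = ((j:ℝ)+1)⁻¹ := by
        rw [← one_div, ← one_div]; exact h1
      have h3 : ((i:ℝ)+1) = ((j:ℝ)+1) := inv_injective h2
      have : (i:ℝ) = (j:ℝ) := by linarith
      exact_mod_cast this
    set S : ℕ → Set (Fin n → ℝ) := fun i => t i • Em with hS
    have hSmeas : ∀ i, MeasurableSet (S i) := fun i =>
      measurableSet_smul (by linarith [ht1 i] : t i ≠ 0) hEmmeas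
    have hSdisj : Pairwise (Function.onFun Disjoint S) := by
      intro i j hij
      rw [Function.onFun, Set.disjoint_left]
      rintro z ⟨x, hx, rfl⟩ ⟨x', hx', hzx'⟩
      -- t i • x = t j • x', x x' ∈ Em ⊆ frontier ∩ Gset
      have hxB := hx.1.1
      have hx'B := hx'.1.1
      have hxG := hx.1.2
      have hx'G := hx'.1.2
      have heq : t i • x = t j • x' := hzx'.symm
      by_cases hxx : x = x'
      · subst hxx
        have hx0 : x ≠ 0 := by
          intro h
          have := hδB x hxB
          rw [h] at this
          simp at this
          linarith
        apply hij
        apply htinj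
        obtain ⟨l, hl⟩ := Function.ne_iff.mp hx0
        have := congrFun heq l
        simp only [Pi.smul_apply, smul_eq_mul] at this
        exact mul_right_cancel₀ (by simpa using hl) this
      · -- x has two-rep point: t i • x ∈ Nset, hence x ∈ Nset, contradiction
        have hmem : t i • x ∈ Nset K :=
          mem_Nset_of_two_reps hxB hx'B (by linarith [ht1 i]) (by linarith [ht1 j])
            rfl heq hxx
        have : x ∈ Nset K := by
          have := smul_Nset hmem (show (0:ℝ) < (t i)⁻¹ by
            have := ht1 i; positivity)
          rwa [smul_smul, inv_mul_cancel₀ (by linarith [ht1 i] : t i ≠ 0), one_smul] at this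
        exact (not_mem_Nset_of_mem_Gset hxG) this
    have hbd : (⋃ i, S i) ⊆ Metric.closedBall 0 (2*m) := by
      rintro z ⟨Si, ⟨i, rfl⟩, x, hx, rfl⟩
      simp only [Metric.mem_closedBall, dist_zero_right]
      have hxm : ‖x‖ ≤ m := by
        simpa [Metric.mem_closedBall, dist_zero_right] using hx.2
      show ‖t i • x‖ ≤ 2*m
      rw [norm_smul, Real.norm_eq_abs, abs_of_pos (by linarith [ht1 i])]
      nlinarith [ht1 i, ht2 i, norm_nonneg x]
    have hsum : ∑' i, volume (S i) ≤ volume (Metric.closedBall (0 : Fin n → ℝ) (2*m)) := by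
      rw [← measure_iUnion hSdisj hSmeas]
      exact measure_mono hbd
    have hval : ∀ i, volume Em ≤ volume (S i) := by
      intro i
      rw [hS]
      simp only
      rw [vol_smul hn (t i) (by linarith [ht1 i])]
      conv_lhs => rw [← one_mul (volume Em)]
      apply mul_le_mul_left
      rw [show (1:ℝ≥0∞) = ENNReal.ofReal 1 by simp]
      apply ENNReal.ofReal_le_ofReal
      apply one_le_pow₀
      linarith [ht1 i]
    by_contra hne
    have h0' : volume Em ≠ 0 := hne
    have : (⊤:ℝ≥0∞) ≤ volume (Metric.closedBall (0 : Fin n → ℝ) (2*m)) := by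
      calc (⊤:ℝ≥0∞) = ∑' (_ : ℕ), volume Em := (ENNReal.tsum_const_eq_top_of_ne_zero h0').symm
      _ ≤ ∑' i, volume (S i) := ENNReal.tsum_le_tsum hval
      _ ≤ _ := hsum
    exact absurd (lt_of_le_of_lt this measure_closedBall_lt_top) (lt_irrefl _)
  have hcover : E0 = ⋃ m : ℕ, E0 ∩ Metric.closedBall 0 m := by
    ext x
    simp only [Set.mem_iUnion, Set.mem_inter_iff, Metric.mem_closedBall, dist_zero_right]
    constructor
    · intro hx
      obtain ⟨m, hm⟩ := exists_nat_ge ‖x‖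
      exact ⟨m, hx, hm⟩
    · rintro ⟨m, hx, -⟩; exact hx
  rw [hcover]
  refine le_antisymm ?_ (zero_le)
  calc volume (⋃ m : ℕ, E0 ∩ Metric.closedBall 0 m)
      ≤ ∑' m : ℕ, volume (E0 ∩ Metric.closedBall 0 m) := measure_iUnion_le _
  _ = 0 := by simp only [key, tsum_zero]

/-! ### the rectangle sets and their volumes -/

def Rset (K : Set (Fin n → ℝ)) (c : ℝ) (A : Set (Fin n → ℝ)) : Set (Fin n → ℝ) :=
  {x ∈ Gset K | gfun K x ≤ c ∧ pfun K x ∈ A}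

lemma measurableSet_Rset {c : ℝ} {A : Set (Fin n → ℝ)} (hA : MeasurableSet A) :
    MeasurableSet (Rset K c A) := by
  have : Rset K c A = Gset K ∩ (gfun K ⁻¹' Set.Iic c) ∩ (pfun K ⁻¹' A) := by
    ext x; simp only [Rset, Set.mem_setOf_eq, Set.mem_inter_iff, Set.mem_preimage,
      Set.mem_Iic, and_assoc]
  rw [this]
  exact (measurableSet_Gset.inter (measurable_gfun measurableSet_Iic)).inter
    (measurable_pfun hA)

lemma Rset_eq {c : ℝ} (hc : 0 < c) (A : Set (Fin n → ℝ)) :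
    Rset K c A = Gset K ∩ c • cone K A := by
  ext x
  simp only [Rset, Set.mem_setOf_eq, Set.mem_inter_iff]
  constructor
  · rintro ⟨hxG, hgle, hpA⟩
    obtain ⟨hg, hpB, hrep⟩ := rep_gfun_pfun hxG
    refine ⟨hxG, (gfun K x / c) • pfun K x, smul_mem_cone ⟨hpA, hpB⟩
      ⟨by positivity, div_le_one_of_le₀ hgle hc.le⟩, ?_⟩
    show c • (gfun K x / c) • pfun K x = x
    rw [smul_smul, mul_div_cancel₀ _ hc.ne', ← hrep]
  · rintro ⟨hxG, z, hz, hxz⟩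
    obtain ⟨r, hr, w, hw, rfl⟩ := hz
    have hxz' : x = (c * r) • w := by
      rw [← hxz]
      show c • r • w = (c * r) • w
      rw [smul_smul]
    have hr0 : r ≠ 0 := by
      rintro rfl
      apply ne_zero_of_mem_Gset hxG
      rw [hxz']; simp
    have hrpos : 0 < r := lt_of_le_of_ne hr.1 (Ne.symm hr0)
    have hg := gfun_eq hxG (by positivity) hw.2 hxz'
    have hp : pfun K x = w := by
      rw [pfun, hg, hxz', smul_smul, inv_mul_cancel₀ (by positivity : c*r ≠ 0), one_smul]
    refine ⟨hxG, ?_, ?_⟩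
    · rw [hg]
      calc c * r ≤ c * 1 := by nlinarith [hr.2]
      _ = c := mul_one c
    · rw [hp]; exact hw.1

lemma vol_Rset (hn : 0 < n) (hpos : 0 < volume K) (hfin : volume K < ⊤)
    (hμ : ∀ A : Set (Fin n → ℝ), MeasurableSet A → μ A = volume (cone K A) / volume K)
    (hGc : volume ((Gset K)ᶜ) = 0)
    {c : ℝ} (hc : 0 ≤ c) {A : Set (Fin n → ℝ)} (hA : MeasurableSet A) :
    volume (Rset K c A) = ENNReal.ofReal (c^n) * (volume K * μ A) := by
  rcases eq_or_lt_of_le hc with rfl | hcpos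
  · have : Rset K 0 A = ∅ := by
      rw [Set.eq_empty_iff_forall_notMem]
      rintro x ⟨hxG, hgle, -⟩
      exact absurd hgle (not_le.2 (rep_gfun_pfun hxG).1)
    rw [this, zero_pow hn.ne']
    simp
  · rw [Rset_eq hcpos]
    have h1 : volume (Gset K ∩ c • cone K A) = volume (c • cone K A) := by
      refine le_antisymm (measure_mono Set.inter_subset_right) ?_
      calc volume (c • cone K A) ≤ volume ((Gset K ∩ c • cone K A) ∪ (Gset K)ᶜ) := by
            apply measure_mono
            intro z hz
            by_cases hzG : z ∈ Gset K
            · exact Or.inl ⟨hzG, hz⟩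
            · exact Or.inr hzG
      _ ≤ volume (Gset K ∩ c • cone K A) + volume ((Gset K)ᶜ) := measure_union_le _ _
      _ = volume (Gset K ∩ c • cone K A) := by rw [hGc, add_zero]
    rw [h1, vol_smul hn c hc, vol_cone_eq hpos hfin hμ hA]

lemma vol_Rset_one_univ (hn : 0 < n)
    (hstar : ∀ x ∈ K, ∀ r ∈ Set.Icc (0:ℝ) 1, r • x ∈ K)
    (h0 : (0 : Fin n → ℝ) ∈ interior K)
    (hpos : 0 < volume K) (hfin : volume K < ⊤)
    (hGc : volume ((Gset K)ᶜ) = 0)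
    {δ : ℝ} (hδ : 0 < δ) (hδB : ∀ y ∈ frontier K, δ ≤ ‖y‖) :
    volume (Rset K 1 Set.univ) = volume K := by
  set W := Rset K 1 Set.univ with hW
  set W' : Set (Fin n → ℝ) := {x | x ∈ Gset K ∧ gfun K x < 1} with hW'
  -- W' ⊆ K
  have hW'K : W' ⊆ K := by
    rintro x ⟨hxG, hg1⟩
    by_contra hxK
    obtain ⟨hgpos, hpB, hrep⟩ := rep_gfun_pfun hxG
    have hx0 : x ≠ 0 := ne_zero_of_mem_Gset hxG
    have h1K : (1:ℝ) • x ∉ K := by rwa [one_smul]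
    obtain ⟨τ, hτpos, hτB, hub, hbelow⟩ := ray_to_frontier hstar h0 hx0 one_pos h1K
    have hrep2 : x = τ⁻¹ • (τ • x) := by
      rw [smul_smul, inv_mul_cancel₀ hτpos.ne', one_smul]
    have := rep_unique hxG hpB hτB hgpos (by positivity) hrep hrep2
    have hgτ : gfun K x = τ⁻¹ := this.1
    have hτ1 : 1 < τ := by
      rw [hgτ] at hg1
      by_contra hle
      push_neg at hle
      have : 1 ≤ τ⁻¹ := by
        rw [le_inv_comm₀ one_pos hτpos]
        simpa using hle
      linarith
    exact hxK (by simpa using hbelow 1 one_pos hτ1)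
  -- K ⊆ W ∪ Sfull ∪ Gᶜ
  have hKW : K ⊆ W ∪ (Sfull K ∪ (Gset K)ᶜ) := by
    intro x hxK
    by_cases hxG : x ∈ Gset K
    · by_cases hxS : x ∈ Sfull K
      · exact Or.inr (Or.inl hxS)
      · left
        have hx0 : x ≠ 0 := ne_zero_of_mem_Gset hxG
        simp only [Sfull, Set.mem_setOf_eq] at hxS
        push_neg at hxS
        obtain ⟨t, ht, htK⟩ := hxS
        obtain ⟨τ, hτpos, hτB, hub, hbelow⟩ := ray_to_frontier hstar h0 hx0 ht htK
        obtain ⟨hgpos, hpB, hrep⟩ := rep_gfun_pfun hxG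
        have hrep2 : x = τ⁻¹ • (τ • x) := by
          rw [smul_smul, inv_mul_cancel₀ hτpos.ne', one_smul]
        have := rep_unique hxG hpB hτB hgpos (by positivity) hrep hrep2
        have hτ1 : 1 ≤ τ := hub 1 one_pos (by simpa using hxK)
        refine ⟨hxG, ?_, trivial⟩
        rw [this.1]
        exact inv_le_one_of_one_le₀ hτ1
    · exact Or.inr (Or.inr hxG)
  -- W \ W' ⊆ frontier K ∩ Gset K
  have hWdiff : W \ W' ⊆ frontier K ∩ Gset K := by
    rintro x ⟨⟨hxG, hgle, -⟩, hxnW'⟩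
    have hgeq : gfun K x = 1 := by
      rcases lt_or_eq_of_le hgle with hlt | heq
      · exact absurd ⟨hxG, hlt⟩ hxnW'
      · exact heq
    obtain ⟨-, hpB, hrep⟩ := rep_gfun_pfun hxG
    have hxp : x = pfun K x := by
      conv_lhs => rw [hrep, hgeq, one_smul]
    exact ⟨by rw [hxp]; exact hpB, hxG⟩
  have hE0 := vol_frontier_Gset (K := K) hn hδ hδB
  have hWW' : volume W ≤ volume W' := by
    calc volume W ≤ volume (W' ∪ (frontier K ∩ Gset K)) := by
          apply measure_mono
          intro x hx
          by_cases hxW' : x ∈ W'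
          · exact Or.inl hxW'
          · exact Or.inr (hWdiff ⟨hx, hxW'⟩)
    _ ≤ volume W' + volume (frontier K ∩ Gset K) := measure_union_le _ _
    _ = volume W' := by rw [hE0, add_zero]
  have hKle : volume K ≤ volume W := by
    calc volume K ≤ volume (W ∪ (Sfull K ∪ (Gset K)ᶜ)) := measure_mono hKW
    _ ≤ volume W + volume (Sfull K ∪ (Gset K)ᶜ) := measure_union_le _ _
    _ ≤ volume W + (volume (Sfull K) + volume ((Gset K)ᶜ)) :=
        add_le_add le_rfl (measure_union_le _ _)
    _ = volume W := by rw [vol_Sfull hn hfin, hGc, add_zero, add_zero]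
  exact le_antisymm (hWW'.trans (measure_mono hW'K)) hKle

lemma mu_univ (hn : 0 < n)
    (hstar : ∀ x ∈ K, ∀ r ∈ Set.Icc (0:ℝ) 1, r • x ∈ K)
    (h0 : (0 : Fin n → ℝ) ∈ interior K)
    (hpos : 0 < volume K) (hfin : volume K < ⊤)
    (hμ : ∀ A : Set (Fin n → ℝ), MeasurableSet A → μ A = volume (cone K A) / volume K)
    (hGc : volume ((Gset K)ᶜ) = 0)
    {δ : ℝ} (hδ : 0 < δ) (hδB : ∀ y ∈ frontier K, δ ≤ ‖y‖) :
    μ Set.univ = 1 := by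
  have hV := vol_Rset_one_univ hn hstar h0 hpos hfin hGc hδ hδB
  have h1 := vol_Rset (μ := μ) hn hpos hfin hμ hGc zero_le_one MeasurableSet.univ
  rw [hV] at h1
  simp only [one_pow, ENNReal.ofReal_one, one_mul] at h1
  have h2 : volume K * 1 = volume K * μ Set.univ := by rw [mul_one]; exact h1
  exact (ennreal_mul_cancel hpos.ne' hfin.ne h2).symm

/-! ### the 1-dimensional density measure -/

lemma lint_pow_Ioc (hn : 0 < n) {a b : ℝ} (ha : 0 ≤ a) (hab : a ≤ b) :
    ∫⁻ r in Set.Ioc a b, ENNReal.ofReal (r^(n-1)) = ENNReal.ofReal ((b^n - a^n)/n) := by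
  have hint : IntegrableOn (fun r : ℝ => r^(n-1)) (Set.Ioc a b) volume :=
    (continuous_pow (n-1)).integrableOn_Ioc
  have hnn : (0 : ℝ → ℝ) ≤ᶠ[ae (volume.restrict (Set.Ioc a b))] (fun r : ℝ => r^(n-1)) := by
    filter_upwards [ae_restrict_mem measurableSet_Ioc] with r hr
    exact pow_nonneg (le_trans ha hr.1.le) _
  rw [← ofReal_integral_eq_lintegral_ofReal hint hnn]
  congr 1
  rw [← intervalIntegral.integral_of_le hab, integral_pow (n-1)]
  have h1 : n - 1 + 1 = n := Nat.succ_pred_eq_of_pos hn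
  have hcast : ((n-1 : ℕ) : ℝ) + 1 = (n : ℝ) := by
    calc ((n-1 : ℕ) : ℝ) + 1 = ((n-1+1 : ℕ) : ℝ) := by push_cast; ring
    _ = (n : ℝ) := by rw [h1]
  rw [Nat.sub_add_cancel hn, hcast]

lemma Ioc_inter_Ioi' (a b : ℝ) : Set.Ioc a b ∩ Set.Ioi 0 = Set.Ioc (max a 0) b := by
  ext x
  simp only [Set.mem_inter_iff, Set.mem_Ioc, Set.mem_Ioi, max_lt_iff]
  tauto

lemma rho_Ioc (hn : 0 < n) (hfin : volume K < ⊤) {a b : ℝ} :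
    ((volume.restrict (Set.Ioi (0:ℝ))).withDensity
        (fun r => (n : ℝ≥0∞) * volume K * ENNReal.ofReal (r^(n-1)))) (Set.Ioc a b)
      = volume K * (ENNReal.ofReal ((max b 0)^n) - ENNReal.ofReal ((max a 0)^n)) := by
  set w : ℝ → ℝ≥0∞ := fun r => (n : ℝ≥0∞) * volume K * ENNReal.ofReal (r^(n-1)) with hw
  have hpowmeas : Measurable (fun r : ℝ => ENNReal.ofReal (r^(n-1))) := by
    apply Measurable.ennreal_ofReal
    exact measurable_id'.pow_const _
  have hwmeas : Measurable w := measurable_const.mul hpowmeas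
  rw [withDensity_apply _ measurableSet_Ioc, Measure.restrict_restrict measurableSet_Ioc,
    Ioc_inter_Ioi' a b]
  rcases le_or_gt b 0 with hb | hb
  · have he : Set.Ioc (max a 0) b = ∅ := by
      rw [Set.Ioc_eq_empty_iff]
      intro hlt
      exact absurd (lt_of_le_of_lt (le_max_right a 0) hlt) (not_lt.2 hb)
    rw [he, max_eq_right hb, zero_pow hn.ne']
    simp [zero_tsub]
  · have hmaxb : max b 0 = b := max_eq_left hb.le
    rcases le_or_gt b (max a 0) with hba | hab
    · have he : Set.Ioc (max a 0) b = ∅ := Set.Ioc_eq_empty (not_lt.2 hba)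
      rw [he, hmaxb]
      have hpow : ENNReal.ofReal (b^n) - ENNReal.ofReal ((max a 0)^n) = 0 := by
        rw [tsub_eq_zero_iff_le]
        exact ENNReal.ofReal_le_ofReal (pow_le_pow_left₀ hb.le hba n)
      rw [hpow]
      simp
    · have ha0 : (0:ℝ) ≤ max a 0 := le_max_right a 0
      have hcalc : ∫⁻ r in Set.Ioc (max a 0) b, w r
          = (n : ℝ≥0∞) * volume K * ENNReal.ofReal ((b^n - (max a 0)^n)/n) := by
        rw [hw]
        rw [lintegral_const_mul _ hpowmeas]
        rw [lint_pow_Ioc hn ha0 hab.le]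
      rw [hcalc, hmaxb]
      have hsub : (0:ℝ) ≤ (max a 0)^n := pow_nonneg ha0 n
      have hkey : (n : ℝ≥0∞) * ENNReal.ofReal ((b^n - (max a 0)^n)/n)
          = ENNReal.ofReal (b^n) - ENNReal.ofReal ((max a 0)^n) := by
        rw [← ENNReal.ofReal_natCast n, ← ENNReal.ofReal_mul (Nat.cast_nonneg n)]
        rw [mul_div_cancel₀ _ (by exact_mod_cast hn.ne' : (n:ℝ) ≠ 0)]
        exact ENNReal.ofReal_sub _ hsub
      calc (n:ℝ≥0∞) * volume K * ENNReal.ofReal ((b^n - (max a 0)^n)/n)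
          = volume K * ((n:ℝ≥0∞) * ENNReal.ofReal ((b^n - (max a 0)^n)/n)) := by ring
      _ = volume K * (ENNReal.ofReal (b^n) - ENNReal.ofReal ((max a 0)^n)) := by rw [hkey]

lemma mu_compl_frontier
    (hμ : ∀ A : Set (Fin n → ℝ), MeasurableSet A → μ A = volume (cone K A) / volume K) :
    μ ((frontier K)ᶜ) = 0 := by
  rw [hμ _ isClosed_frontier.measurableSet.compl]
  have : cone K ((frontier K)ᶜ) = ∅ := by
    rw [Set.eq_empty_iff_forall_notMem]
    rintro y ⟨r, hr, x, hx, rfl⟩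
    exact hx.1 hx.2
  rw [this]
  simp

lemma m1_Ioc (hn : 0 < n) (hpos : 0 < volume K) (hfin : volume K < ⊤)
    (hμ : ∀ A : Set (Fin n → ℝ), MeasurableSet A → μ A = volume (cone K A) / volume K)
    (hμuniv : μ Set.univ = 1) (hGc : volume ((Gset K)ᶜ) = 0)
    {A : Set (Fin n → ℝ)} (hA : MeasurableSet A) {a b : ℝ} :
    Measure.map (gfun K) (volume.restrict (Gset K ∩ pfun K ⁻¹' A)) (Set.Ioc a b)
      = (volume K * μ A) * (ENNReal.ofReal ((max b 0)^n) - ENNReal.ofReal ((max a 0)^n)) := by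
  have hμA1 : μ A ≤ 1 := by rw [← hμuniv]; exact measure_mono (Set.subset_univ A)
  have hμAfin : μ A ≠ ⊤ := (lt_of_le_of_lt hμA1 ENNReal.one_lt_top).ne
  have hGA : MeasurableSet (Gset K ∩ pfun K ⁻¹' A) :=
    measurableSet_Gset.inter (measurable_pfun hA)
  rw [Measure.map_apply measurable_gfun measurableSet_Ioc,
    Measure.restrict_apply (measurable_gfun measurableSet_Ioc)]
  rcases le_or_gt b 0 with hb | hb
  · have he : gfun K ⁻¹' Set.Ioc a b ∩ (Gset K ∩ pfun K ⁻¹' A) = ∅ := by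
      rw [Set.eq_empty_iff_forall_notMem]
      rintro x ⟨hg, hxG, -⟩
      have := (rep_gfun_pfun hxG).1
      simp only [Set.mem_preimage, Set.mem_Ioc] at hg
      linarith [hg.2]
    rw [he, max_eq_right hb, zero_pow hn.ne']
    simp [zero_tsub]
  · have hmaxb : max b 0 = b := max_eq_left hb.le
    rw [hmaxb]
    rcases le_or_gt b (max a 0) with hba | hab
    · -- empty interval
      have he : gfun K ⁻¹' Set.Ioc a b ∩ (Gset K ∩ pfun K ⁻¹' A) = ∅ := by
        rw [Set.eq_empty_iff_forall_notMem]
        rintro x ⟨hg, hxG, -⟩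
        simp only [Set.mem_preimage, Set.mem_Ioc] at hg
        have h1 := (rep_gfun_pfun hxG).1
        have h2 : max a 0 < gfun K x := max_lt hg.1 h1
        linarith [hg.2, h2]
      rw [he]
      have hz : ENNReal.ofReal (b^n) - ENNReal.ofReal ((max a 0)^n) = 0 := by
        rw [tsub_eq_zero_iff_le]
        exact ENNReal.ofReal_le_ofReal
          (pow_le_pow_left₀ hb.le hba n)
      rw [hz]
      simp
    · have ha0 : (0:ℝ) ≤ max a 0 := le_max_right a 0
      have hseteq : gfun K ⁻¹' Set.Ioc a b ∩ (Gset K ∩ pfun K ⁻¹' A)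
          = Rset K b A \ Rset K (max a 0) A := by
        ext x
        simp only [Set.mem_preimage, Set.mem_Ioc, Set.mem_inter_iff, Set.mem_diff,
          Rset, Set.mem_setOf_eq]
        constructor
        · rintro ⟨⟨hga, hgb⟩, hxG, hpA⟩
          refine ⟨⟨hxG, hgb, hpA⟩, ?_⟩
          rintro ⟨-, hgle, -⟩
          have hgpos := (rep_gfun_pfun hxG).1
          have : max a 0 < gfun K x := max_lt hga hgpos
          linarith
        · rintro ⟨⟨hxG, hgb, hpA⟩, hnot⟩
          refine ⟨⟨?_, hgb⟩, hxG, hpA⟩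
          by_contra hle
          push_neg at hle
          exact hnot ⟨hxG, le_trans hle (le_max_left a 0), hpA⟩
      rw [hseteq]
      have hsub : Rset K (max a 0) A ⊆ Rset K b A := by
        rintro x ⟨hxG, hgle, hpA⟩
        exact ⟨hxG, hgle.trans hab.le, hpA⟩
      have hfin' : volume (Rset K (max a 0) A) ≠ ⊤ := by
        rw [vol_Rset hn hpos hfin hμ hGc ha0 hA]
        exact ENNReal.mul_ne_top ENNReal.ofReal_ne_top
          (ENNReal.mul_ne_top hfin.ne hμAfin)
      rw [measure_diff hsub (measurableSet_Rset hA).nullMeasurableSet hfin']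
      rw [vol_Rset hn hpos hfin hμ hGc hb.le hA, vol_Rset hn hpos hfin hμ hGc ha0 hA]
      rw [mul_comm (volume K * μ A)]
      rw [ENNReal.sub_mul (fun _ _ => ENNReal.mul_ne_top hfin.ne hμAfin)]

lemma map_theta_eq_prod (hn : 0 < n) (hpos : 0 < volume K) (hfin : volume K < ⊤)
    (hμ : ∀ A : Set (Fin n → ℝ), MeasurableSet A → μ A = volume (cone K A) / volume K)
    (hμuniv : μ Set.univ = 1) (hGc : volume ((Gset K)ᶜ) = 0) :
    Measure.map (fun x => (gfun K x, pfun K x)) (volume.restrict (Gset K))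
      = ((volume.restrict (Set.Ioi (0:ℝ))).withDensity
          (fun r => (n : ℝ≥0∞) * volume K * ENNReal.ofReal (r^(n-1)))).prod μ := by
  set w : ℝ → ℝ≥0∞ := fun r => (n : ℝ≥0∞) * volume K * ENNReal.ofReal (r^(n-1)) with hw
  set ρ : Measure ℝ := (volume.restrict (Set.Ioi (0:ℝ))).withDensity w with hρ
  haveI : IsFiniteMeasure μ := ⟨by rw [hμuniv]; exact ENNReal.one_lt_top⟩
  haveI : SigmaFinite ρ := SigmaFinite.withDensity_of_ne_top
    (ae_of_all _ fun r => ENNReal.mul_ne_top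
      (ENNReal.mul_ne_top (ENNReal.natCast_ne_top n) hfin.ne) ENNReal.ofReal_ne_top)
  have hΘ : Measurable (fun x : Fin n → ℝ => (gfun K x, pfun K x)) :=
    measurable_gfun.prodMk measurable_pfun
  refine (Measure.prod_eq fun s t hs ht => ?_).symm
  rw [Measure.map_apply hΘ (hs.prod ht), Measure.restrict_apply (hΘ (hs.prod ht))]
  have hpre : (fun x : Fin n → ℝ => (gfun K x, pfun K x)) ⁻¹' (s ×ˢ t)
      = gfun K ⁻¹' s ∩ pfun K ⁻¹' t := Set.mk_preimage_prod _ _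
  rw [hpre]
  set m1 : Measure ℝ := Measure.map (gfun K) (volume.restrict (Gset K ∩ pfun K ⁻¹' t))
    with hm1def
  have hm1s : volume (gfun K ⁻¹' s ∩ pfun K ⁻¹' t ∩ Gset K) = m1 s := by
    rw [hm1def, Measure.map_apply measurable_gfun hs,
      Measure.restrict_apply (measurable_gfun hs)]
    congr 1
    ext x
    simp only [Set.mem_inter_iff, Set.mem_preimage]
    tauto
  have hloc : IsLocallyFiniteMeasure m1 := by
    constructor
    intro x
    refine ⟨Set.Ioc (x-1) (x+1), Ioc_mem_nhds (by linarith) (by linarith), ?_⟩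
    rw [hm1def, m1_Ioc hn hpos hfin hμ hμuniv hGc ht]
    apply ENNReal.mul_lt_top
    · apply ENNReal.mul_lt_top hfin
      exact lt_of_le_of_lt (by rw [← hμuniv]; exact measure_mono (Set.subset_univ t))
        ENNReal.one_lt_top
    · exact lt_of_le_of_lt tsub_le_self ENNReal.ofReal_lt_top
  have hm1 : m1 = (μ t) • ρ := by
    haveI := hloc
    refine Measure.ext_of_Ioc m1 _ (fun a b _ => ?_)
    rw [hm1def, m1_Ioc hn hpos hfin hμ hμuniv hGc ht, Measure.smul_apply, hρ,
      rho_Ioc hn hfin, smul_eq_mul]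
    ring
  rw [hm1s, hm1, Measure.smul_apply, smul_eq_mul, mul_comm]

end Polar17

open Polar17

/-- general polar integration formula: for `K ⊆ ℝⁿ` star-shaped
with respect to the origin, with the origin in its interior and finite nonzero
volume, and the cone probability measure `μ = C_K` on `∂K`, one has
`∫ h(x) dx = n · vol(K) · ∫_0^∞ r^{n-1} ∫_{∂K} h(r·y) C_K(dy) dr`. -/
theorem polar_integration_general
    (n : ℕ) (hn : 0 < n) (K : Set (Fin n → ℝ))
    (hstar : ∀ x ∈ K, ∀ r ∈ Set.Icc (0:ℝ) 1, r • x ∈ K)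
    (h0 : (0 : Fin n → ℝ) ∈ interior K)
    (hvol_pos : 0 < volume K) (hvol_fin : volume K < ⊤)
    (μ : Measure (Fin n → ℝ))
    (hμ : ∀ A : Set (Fin n → ℝ), MeasurableSet A →
      μ A = volume {y | ∃ r ∈ Set.Icc (0:ℝ) 1, ∃ x ∈ A ∩ frontier K, y = r • x} / volume K)
    (h : (Fin n → ℝ) → ℝ) (hmeas : Measurable h) (hnonneg : ∀ x, 0 ≤ h x) :
    ∫⁻ x, ENNReal.ofReal (h x) =
      (n : ℝ≥0∞) * volume K *
        ∫⁻ r in Set.Ioi (0:ℝ),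
          ENNReal.ofReal (r ^ (n - 1)) * ∫⁻ y in frontier K, ENNReal.ofReal (h (r • y)) ∂μ := by
  classical
  have hμ' : ∀ A : Set (Fin n → ℝ), MeasurableSet A →
      μ A = volume (cone K A) / volume K := hμ
  obtain ⟨ε, hε, hball⟩ := Metric.isOpen_iff.1 isOpen_interior 0 h0
  have hδ : 0 < ε/2 := by linarith
  have hδB : ∀ y ∈ frontier K, ε/2 ≤ ‖y‖ := by
    intro y hy
    by_contra hlt
    push_neg at hlt
    have hyint : y ∈ interior K := hball (by
      simp only [Metric.mem_ball, dist_zero_right]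
      linarith)
    exact hy.2 hyint
  have hGc := vol_compl_Gset hn hstar h0 hvol_pos hvol_fin hμ' hδ hδB
  have hμuniv := mu_univ hn hstar h0 hvol_pos hvol_fin hμ' hGc hδ hδB
  haveI : IsFiniteMeasure μ := ⟨by rw [hμuniv]; exact ENNReal.one_lt_top⟩
  have hBae : μ.restrict (frontier K) = μ := by
    apply Measure.restrict_eq_self_of_ae_mem
    rw [MeasureTheory.ae_iff]
    exact mu_compl_frontier hμ'
  have hGae : ∀ᵐ x : (Fin n → ℝ), x ∈ Gset K := by
    rw [MeasureTheory.ae_iff]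
    exact hGc
  set w : ℝ → ℝ≥0∞ := fun r => (n : ℝ≥0∞) * volume K * ENNReal.ofReal (r^(n-1)) with hw
  set ρ : Measure ℝ := (volume.restrict (Set.Ioi (0:ℝ))).withDensity w with hρ
  have hpowmeas : Measurable (fun r : ℝ => ENNReal.ofReal (r^(n-1))) := by
    apply Measurable.ennreal_ofReal
    exact measurable_id'.pow_const _
  have hwmeas : Measurable w := measurable_const.mul hpowmeas
  set F : ℝ × (Fin n → ℝ) → ℝ≥0∞ := fun p => ENNReal.ofReal (h (p.1 • p.2)) with hF
  have hFmeas : Measurable F :=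
    (hmeas.comp (continuous_fst.smul continuous_snd).measurable).ennreal_ofReal
  have hΘ : Measurable (fun x : Fin n → ℝ => (gfun K x, pfun K x)) :=
    measurable_gfun.prodMk measurable_pfun
  have hInner : Measurable (fun r : ℝ => ∫⁻ y, F (r, y) ∂μ) :=
    Measurable.lintegral_prod_right hFmeas
  rw [hBae]
  calc ∫⁻ x, ENNReal.ofReal (h x)
      = ∫⁻ x, ENNReal.ofReal (h x) ∂(volume.restrict (Gset K)) := by
        rw [Measure.restrict_eq_self_of_ae_mem hGae]
  _ = ∫⁻ x in Gset K, F ((fun x => (gfun K x, pfun K x)) x) := by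
        apply setLIntegral_congr_fun measurableSet_Gset
        intro x hxG
        obtain ⟨-, -, hrep⟩ := rep_gfun_pfun hxG
        rw [hF]
        simp only
        rw [← hrep]
  _ = ∫⁻ p, F p ∂(Measure.map (fun x => (gfun K x, pfun K x)) (volume.restrict (Gset K))) :=
        (lintegral_map hFmeas hΘ).symm
  _ = ∫⁻ p, F p ∂(ρ.prod μ) := by
        rw [map_theta_eq_prod hn hvol_pos hvol_fin hμ' hμuniv hGc]
  _ = ∫⁻ r, ∫⁻ y, F (r, y) ∂μ ∂ρ := lintegral_prod F hFmeas.aemeasurable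
  _ = ∫⁻ r in Set.Ioi (0:ℝ), (w * fun r => ∫⁻ y, F (r, y) ∂μ) r := by
        rw [hρ]
        exact lintegral_withDensity_eq_lintegral_mul _ hwmeas hInner
  _ = ∫⁻ r in Set.Ioi (0:ℝ), ((n : ℝ≥0∞) * volume K) *
        (ENNReal.ofReal (r^(n-1)) * ∫⁻ y, F (r, y) ∂μ) := by
        apply lintegral_congr
        intro r
        simp only [hw, Pi.mul_apply]
        ring
  _ = (n : ℝ≥0∞) * volume K *
        ∫⁻ r in Set.Ioi (0:ℝ), ENNReal.ofReal (r^(n-1)) * ∫⁻ y, F (r, y) ∂μ := by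
        rw [lintegral_const_mul _ (f := fun r => ENNReal.ofReal (r^(n-1)) * ∫⁻ y, F (r, y) ∂μ) (hpowmeas.mul hInner)]
  _ = (n : ℝ≥0∞) * volume K *
        ∫⁻ r in Set.Ioi (0:ℝ), ENNReal.ofReal (r^(n-1)) * ∫⁻ y, ENNReal.ofReal (h (r • y)) ∂μ :=
        rfl
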